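/- Let u be a binary word of length n with u ≠ 1^n. Then D_t(1^n) ⊆ D_t(u) if and only if the Hamming weight of u is at least n−t. -/

import Mathlib

/-- The set of subsequences of `u` of length `u.length - t`. -/
def Dset (t : ℕ) (u : List Bool) : Set (List Bool) :=
  {w | w.Sublist u ∧ w.length = u.length - t}

theorem dominant_over_ones (n t : ℕ) (ht : t < n) (u : List Bool)
    (hu : u.length = n) (hne : u ≠ List.replicate n true) :
    Dset t (List.replicate n true) ⊆ Dset t u ↔ n - t ≤ u.count true := by
  constructor
  · intro h
    have hmem : List.replicate (n - t) true ∈ Dset t (List.replicate n true) := by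
      refine ⟨(List.replicate_sublist_replicate true).2 (Nat.sub_le n t), ?_⟩
      simp
    have := h hmem
    exact List.replicate_sublist_iff.1 this.1
  · intro h w hw
    obtain ⟨hsub, hlen⟩ := hw
    simp only [List.length_replicate] at hlen
    obtain ⟨k, hk, rfl⟩ := List.sublist_replicate_iff.1 hsub
    simp only [List.length_replicate] at hlen
    subst hlen
    exact ⟨List.replicate_sublist_iff.2 h, by simp [hu]⟩
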